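/- Let G be a connected graph on vertex set {u', u''} ∪ R where u'u'' ∈ E(G), every vertex of R is adjacent to both u' and u'', G[R] has maximum degree at most 2, and in the normalized Perron vector x of G one has x_{u'} = x_{u''} = 1 and x_v ≤ 1/10 for all v ∈ R. Then for every v ∈ R, 2/ρ(G) ≤ x_v ≤ 2/ρ(G) + 6/ρ(G)². -/

import Mathlib

open SimpleGraph

/-- The adjacency spectral radius of a finite simple graph. -/
noncomputable def specRad {V : Type*} [Fintype V] [DecidableEq V] (G : SimpleGraph V) : ℝ :=
  letI := Classical.decRel G.Adj
  sSup ((fun μ : ℝ => |μ|) '' spectrum ℝ (G.adjMatrix ℝ))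

/-- `G` contains a copy of `H` as a subgraph. -/
def Contains {V W : Type*} (G : SimpleGraph V) (H : SimpleGraph W) : Prop :=
  ∃ f : W ↪ V, ∀ a b, H.Adj a b → G.Adj (f a) (f b)

/-- `G` contains `C_{l,l}`: two cycles of length `l` sharing exactly one vertex. -/
def ContainsCll {V : Type*} (G : SimpleGraph V) (l : ℕ) : Prop :=
  ∃ (u : V) (c₁ c₂ : G.Walk u u), c₁.IsCycle ∧ c₂.IsCycle ∧ c₁.length = l ∧ c₂.length = l ∧
    ∀ v, v ∈ c₁.support → v ∈ c₂.support → v = u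

/-- Theta graph on `k` vertices: the cycle `0,1,…,k-1` plus a chord from `0` to `a`. -/
def thetaGraph (k a : ℕ) : SimpleGraph (Fin k) :=
  SimpleGraph.fromRel (fun i j =>
    (j : ℕ) = (i : ℕ) + 1 ∨ ((i : ℕ) = k - 1 ∧ (j : ℕ) = 0) ∨ ((i : ℕ) = 0 ∧ (j : ℕ) = a))

/-- `G` contains some member of `Θ_k`, the set of Theta graphs on `k` vertices. -/
def ContainsTheta {V : Type*} (G : SimpleGraph V) (k : ℕ) : Prop :=
  ∃ a, 2 ≤ a ∧ a ≤ k - 2 ∧ Contains G (thetaGraph k a)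

/-- The join of two graphs: all edges between the two vertex sets are added. -/
def joinG {V W : Type*} (G : SimpleGraph V) (H : SimpleGraph W) : SimpleGraph (V ⊕ W) where
  Adj a b := match a, b with
    | Sum.inl a, Sum.inl b => G.Adj a b
    | Sum.inr a, Sum.inr b => H.Adj a b
    | Sum.inl _, Sum.inr _ => True
    | Sum.inr _, Sum.inl _ => True
  symm := by
    refine ⟨?_⟩
    rintro (a | a) (b | b) h
    · exact h.symm
    · trivial
    · trivial
    · exact h.symm
  loopless := by
    refine ⟨?_⟩
    rintro (a | a) h
    · exact G.irrefl h
    · exact H.irrefl h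

/-- The disjoint union of `t` paths, the `i`-th having `f i` vertices. -/
def pathsUnion (t : ℕ) (f : ℕ → ℕ) : SimpleGraph (Σ i : Fin t, Fin (f i.1)) where
  Adj a b := a.1 = b.1 ∧ ((a.2 : ℕ) + 1 = (b.2 : ℕ) ∨ (b.2 : ℕ) + 1 = (a.2 : ℕ))
  symm := by
    refine ⟨?_⟩
    rintro ⟨i, a⟩ ⟨j, b⟩ ⟨h₁, h₂⟩
    exact ⟨h₁.symm, h₂.symm⟩
  loopless := by
    refine ⟨?_⟩
    rintro ⟨i, a⟩ ⟨-, h⟩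
    omega

/-- `H` is a minor of `G`: disjoint connected branch sets, one for each vertex of `H`,
with edges of `G` between branch sets corresponding to edges of `H`. -/
def IsMinor {V W : Type*} (H : SimpleGraph W) (G : SimpleGraph V) : Prop :=
  ∃ B : W → Set V, (∀ w, (B w).Nonempty) ∧ (∀ w, (G.induce (B w)).Connected) ∧
    (∀ w₁ w₂, w₁ ≠ w₂ → Disjoint (B w₁) (B w₂)) ∧
    ∀ w₁ w₂, H.Adj w₁ w₂ → ∃ v₁ ∈ B w₁, ∃ v₂ ∈ B w₂, G.Adj v₁ v₂

/-- Planarity via Wagner's theorem: no `K₅` minor and no `K₃,₃` minor. -/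
def IsPlanar {V : Type*} (G : SimpleGraph V) : Prop :=
  ¬ IsMinor (⊤ : SimpleGraph (Fin 5)) G ∧
  ¬ IsMinor (completeBipartiteGraph (Fin 3) (Fin 3)) G

open Matrix in
open scoped Classical in
theorem stmt12 {R : Type*} [Fintype R] [DecidableEq R] (G : SimpleGraph (Fin 2 ⊕ R))
    (hconn : G.Connected)
    (hK2 : G.Adj (Sum.inl 0) (Sum.inl 1))
    (hspan : ∀ (i : Fin 2) (v : R), G.Adj (Sum.inl i) (Sum.inr v))
    (hdeg : ∀ v : R, {w : R | G.Adj (Sum.inr v) (Sum.inr w)}.ncard ≤ 2)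
    (x : Fin 2 ⊕ R → ℝ) (hpos : ∀ v, 0 < x v) (hmax : ∀ v, x v ≤ 1)
    (heig : G.adjMatrix ℝ *ᵥ x = specRad G • x)
    (h1 : x (Sum.inl 0) = 1) (h2 : x (Sum.inl 1) = 1)
    (hsmall : ∀ v : R, x (Sum.inr v) ≤ 1 / 10) :
    ∀ v : R, 2 / specRad G ≤ x (Sum.inr v) ∧
      x (Sum.inr v) ≤ 2 / specRad G + 6 / (specRad G) ^ 2 := by

  classical
  set ρ := specRad G with hρdef
  have hsum : ∀ u, ∑ w ∈ G.neighborFinset u, x w = ρ * x u := by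
    intro u
    have := congrFun heig u
    rw [SimpleGraph.adjMatrix_mulVec_apply] at this
    simpa using this
  have hρ1 : (1:ℝ) ≤ ρ := by
    have h := hsum (Sum.inl 0)
    rw [h1, mul_one] at h
    rw [← h]
    have hmem : Sum.inl 1 ∈ G.neighborFinset (Sum.inl (0 : Fin 2)) := by
      rw [SimpleGraph.mem_neighborFinset]; exact hK2
    have := Finset.single_le_sum (f := x) (fun w _ => (hpos w).le) hmem
    rwa [h2] at this
  have hρ0 : (0:ℝ) < ρ := lt_of_lt_of_le one_pos hρ1
  have key : ∀ v : R, ρ * x (Sum.inr v) =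
      2 + ∑ w ∈ Finset.univ.filter (fun w => G.Adj (Sum.inr v) (Sum.inr w)), x (Sum.inr w) := by
    intro v
    rw [← hsum, SimpleGraph.neighborFinset_eq_filter, Finset.sum_filter,
      Fintype.sum_sum_type, Fin.sum_univ_two, if_pos ((hspan 0 v).symm),
      if_pos ((hspan 1 v).symm), h1, h2, Finset.sum_filter]
    push_cast
    ring
  have hcard : ∀ v : R,
      (Finset.univ.filter (fun w => G.Adj (Sum.inr v) (Sum.inr w))).card ≤ 2 := by
    intro v
    have := hdeg v
    rwa [Set.ncard_eq_toFinset_card', Set.toFinset_setOf] at this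
  have hS0 : ∀ v : R,
      0 ≤ ∑ w ∈ Finset.univ.filter (fun w => G.Adj (Sum.inr v) (Sum.inr w)), x (Sum.inr w) :=
    fun v => Finset.sum_nonneg fun w _ => (hpos _).le
  -- bootstrap: ρ * x(inr w) ≤ 3
  have hboot : ∀ w : R, ρ * x (Sum.inr w) ≤ 3 := by
    intro w
    rw [key w]
    have hle : ∑ u ∈ Finset.univ.filter (fun u => G.Adj (Sum.inr w) (Sum.inr u)),
        x (Sum.inr u) ≤ (2 : ℕ) • (1/10 : ℝ) := by
      calc _ ≤ (Finset.univ.filter (fun u => G.Adj (Sum.inr w) (Sum.inr u))).card • (1/10 : ℝ) :=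
            Finset.sum_le_card_nsmul _ _ _ (fun u _ => hsmall u)
        _ ≤ (2 : ℕ) • (1/10 : ℝ) := by
            have := hcard w
            have h10 : (0:ℝ) ≤ 1/10 := by norm_num
            simpa [nsmul_eq_mul] using mul_le_mul_of_nonneg_right
              (by exact_mod_cast this : ((Finset.univ.filter
                (fun u => G.Adj (Sum.inr w) (Sum.inr u))).card : ℝ) ≤ 2) h10
    simp only [nsmul_eq_mul] at hle
    linarith
  have hρS : ∀ v : R,
      ρ * ∑ w ∈ Finset.univ.filter (fun w => G.Adj (Sum.inr v) (Sum.inr w)), x (Sum.inr w) ≤ 6 := by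
    intro v
    rw [Finset.mul_sum]
    calc ∑ w ∈ Finset.univ.filter (fun w => G.Adj (Sum.inr v) (Sum.inr w)), ρ * x (Sum.inr w)
        ≤ (Finset.univ.filter (fun w => G.Adj (Sum.inr v) (Sum.inr w))).card • (3:ℝ) :=
          Finset.sum_le_card_nsmul _ _ _ (fun w _ => hboot w)
      _ ≤ 6 := by
          have := hcard v
          have : ((Finset.univ.filter (fun w => G.Adj (Sum.inr v) (Sum.inr w))).card : ℝ) ≤ 2 := by
            exact_mod_cast this
          simp only [nsmul_eq_mul]
          linarith
  intro v
  have hk := key v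
  have hS0v := hS0 v
  have hρSv := hρS v
  constructor
  · rw [div_le_iff₀ hρ0]
    nlinarith
  · have h2' : (2:ℝ)/ρ + 6/ρ^2 = (2*ρ + 6)/ρ^2 := by
      field_simp
    rw [h2', le_div_iff₀ (by positivity : (0:ℝ) < ρ^2)]
    nlinarith [mul_le_mul_of_nonneg_left hk.ge hρ0.le]
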